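/- Suppose for each n, proj_n(T_θ f) = m_λ(n,θ)·proj_n f with m_λ(n,θ) = C_n^λ(cosθ)/C_n^λ(1), and define the ball-to-simplex map ψ(x) = (x₁²,…,x_d²). If T_θ^T is defined on the simplex by (T_θ^T f)∘ψ = T_θ^B(f∘ψ), and f ∈ V_n(W^T) corresponds to f∘ψ ∈ V_{2n}(W^B), then proj_n(T_θ^T f) = (C_{2n}^λ(cosθ)/C_{2n}^λ(1))·proj_n f = (p_n^{(λ-1/2,-1/2)}(cos2θ)/p_n^{(λ-1/2,-1/2)}(1))·proj_n f. -/

import Mathlib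

open MeasureTheory

noncomputable section

/-- The Gegenbauer (ultraspherical) polynomial `C_n^λ`, defined by the standard
three-term recurrence. -/
def gegenbauer (lam : ℝ) : ℕ → ℝ → ℝ
  | 0 => fun _ => 1
  | 1 => fun t => 2 * lam * t
  | n + 2 => fun t =>
      (2 * ((n : ℝ) + 1 + lam) * t * gegenbauer lam (n + 1) t
        - ((n : ℝ) + 2 * lam) * gegenbauer lam n t) / ((n : ℝ) + 2)

/-- `p : ℕ → ℝ → ℝ` is the family of orthonormal Jacobi polynomials with
parameters `(α, β)`. -/
def IsOrthonormalJacobi (α β : ℝ) (p : ℕ → ℝ → ℝ) : Prop :=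
  (∀ n : ℕ, ∃ q : Polynomial ℝ,
      q.natDegree = n ∧ 0 < q.leadingCoeff ∧ ∀ t, p n t = q.eval t) ∧
  (∀ m n : ℕ,
    ((∫ t in Set.Icc (-1 : ℝ) 1, (1 - t) ^ α * (1 + t) ^ β)⁻¹
        * ∫ t in Set.Icc (-1 : ℝ) 1,
            p m t * p n t * ((1 - t) ^ α * (1 + t) ^ β))
      = if m = n then 1 else 0)

/-- The ball-to-simplex map `ψ(x) = (x₁²,…,x_d²)`. -/
def psiMap {d : ℕ} (x : Fin d → ℝ) : Fin d → ℝ := fun i => (x i) ^ 2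

namespace Stmt17Aux

open Polynomial

def geg (l : ℝ) : ℕ → Polynomial ℝ
  | 0 => 1
  | 1 => Polynomial.C (2*l) * Polynomial.X
  | n + 2 => Polynomial.C (((n:ℝ)+2)⁻¹) *
      (Polynomial.C (2*((n:ℝ)+1+l)) * Polynomial.X * geg l (n+1)
        - Polynomial.C ((n:ℝ)+2*l) * geg l n)

lemma geg_eval (l : ℝ) : ∀ (n : ℕ) (t : ℝ), gegenbauer l n t = (geg l n).eval t
  | 0, t => by simp [gegenbauer, geg]
  | 1, t => by simp [gegenbauer, geg]
  | n+2, t => by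
    have h1 := geg_eval l (n+1) t
    have h0 := geg_eval l n t
    show (2 * ((n : ℝ) + 1 + l) * t * gegenbauer l (n + 1) t
        - ((n : ℝ) + 2 * l) * gegenbauer l n t) / ((n : ℝ) + 2) = _
    rw [h1, h0]
    simp only [geg, eval_mul, eval_sub, eval_C, eval_X]
    rw [div_eq_mul_inv]; ring

lemma geg_rec (l : ℝ) (n : ℕ) :
    Polynomial.C ((n:ℝ)+2) * geg l (n+2)
      = Polynomial.C (2*((n:ℝ)+1+l)) * Polynomial.X * geg l (n+1)
        - Polynomial.C ((n:ℝ)+2*l) * geg l n := by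
  show Polynomial.C ((n:ℝ)+2) * (Polynomial.C (((n:ℝ)+2)⁻¹) * _) = _
  rw [← mul_assoc, ← Polynomial.C_mul, mul_inv_cancel₀ (by positivity), Polynomial.C_1, one_mul]

lemma geg_rec_deriv (l : ℝ) (n : ℕ) :
    Polynomial.C ((n:ℝ)+2) * derivative (geg l (n+2))
      = Polynomial.C (2*((n:ℝ)+1+l)) * (geg l (n+1) + Polynomial.X * derivative (geg l (n+1)))
        - Polynomial.C ((n:ℝ)+2*l) * derivative (geg l n) := by
  have h := congrArg derivative (geg_rec l n)
  simp only [derivative_mul, derivative_sub, derivative_C, derivative_X] at h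
  linear_combination h

lemma geg_rec_deriv2 (l : ℝ) (n : ℕ) :
    Polynomial.C ((n:ℝ)+2) * derivative (derivative (geg l (n+2)))
      = Polynomial.C (2*((n:ℝ)+1+l)) * (2 * derivative (geg l (n+1))
          + Polynomial.X * derivative (derivative (geg l (n+1))))
        - Polynomial.C ((n:ℝ)+2*l) * derivative (derivative (geg l n)) := by
  have h := congrArg derivative (geg_rec_deriv l n)
  simp only [derivative_mul, derivative_add, derivative_sub, derivative_C, derivative_X] at h
  linear_combination h

lemma one_sub_sq_ne {x : ℝ} (h1 : x ≠ 1) (h2 : x ≠ -1) : (1:ℝ) - x^2 ≠ 0 := by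
  intro h
  have : (1 - x) * (1 + x) = 0 := by linear_combination h
  rcases mul_eq_zero.mp this with h | h
  · exact h1 (by linarith)
  · exact h2 (by linarith)

lemma infinite_ne : ({x : ℝ | x ≠ 1 ∧ x ≠ -1}).Infinite := by
  have : ({x : ℝ | x ≠ 1 ∧ x ≠ -1}) = (({1, -1} : Set ℝ))ᶜ := by
    ext x; simp [not_or]
  rw [this]
  exact Set.Finite.infinite_compl (by simp)

lemma gegB (l : ℝ) : ∀ n : ℕ,
    (1 - Polynomial.X^2) * derivative (geg l (n+1))
      = Polynomial.C ((n:ℝ)+2*l) * geg l n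
        - Polynomial.C ((n:ℝ)+1) * Polynomial.X * geg l (n+1) := by
  have base0 : (1 - Polynomial.X^2) * derivative (geg l 1)
      = Polynomial.C ((0:ℝ)+2*l) * geg l 0
        - Polynomial.C ((0:ℝ)+1) * Polynomial.X * geg l 1 := by
    apply Polynomial.funext; intro x
    simp [geg, derivative_mul]
    ring
  have base1 : (1 - Polynomial.X^2) * derivative (geg l 2)
      = Polynomial.C ((1:ℝ)+2*l) * geg l 1
        - Polynomial.C ((1:ℝ)+1) * Polynomial.X * geg l 2 := by
    apply Polynomial.funext; intro x
    have h2 : geg l 2 = Polynomial.C (((0:ℕ):ℝ)+2)⁻¹ *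
      (Polynomial.C (2*(((0:ℕ):ℝ)+1+l)) * Polynomial.X * geg l 1
        - Polynomial.C (((0:ℕ):ℝ)+2*l) * geg l 0) := rfl
    rw [h2]
    simp [geg, derivative_mul]
    ring
  have key : ∀ n : ℕ,
      ((1 - Polynomial.X^2) * derivative (geg l (n+1))
        = Polynomial.C ((n:ℝ)+2*l) * geg l n
          - Polynomial.C ((n:ℝ)+1) * Polynomial.X * geg l (n+1)) ∧
      ((1 - Polynomial.X^2) * derivative (geg l (n+2))
        = Polynomial.C (((n:ℝ)+1)+2*l) * geg l (n+1)
          - Polynomial.C (((n:ℝ)+1)+1) * Polynomial.X * geg l (n+2)) := by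
    intro n
    induction n with
    | zero =>
      refine ⟨by simpa using base0, ?_⟩
      simpa using base1
    | succ k ih =>
      refine ⟨by push_cast; exact ih.2, ?_⟩
      apply Polynomial.eq_of_infinite_eval_eq
      apply Set.Infinite.mono ?_ infinite_ne
      intro x hx
      obtain ⟨hx1, hx2⟩ := hx
      simp only [Set.mem_setOf_eq]
      have hden : (1:ℝ) - x^2 ≠ 0 := one_sub_sq_ne hx1 hx2
      have hk2 : ((k:ℝ)+2) ≠ 0 := by positivity
      have hk3 : ((k:ℝ)+3) ≠ 0 := by positivity
      -- eval'd facts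
      have r2 := congrArg (Polynomial.eval x) (geg_rec l k)
      have r3 := congrArg (Polynomial.eval x) (geg_rec l (k+1))
      have rd3 := congrArg (Polynomial.eval x) (geg_rec_deriv l (k+1))
      have hB0 := congrArg (Polynomial.eval x) ih.1
      have hB1 := congrArg (Polynomial.eval x) ih.2
      simp only [eval_mul, eval_sub, eval_add, eval_C, eval_X, eval_one, eval_pow,
        show k+1+2 = k+3 from rfl, show k+1+1 = k+2 from rfl] at r2 r3 rd3 hB0 hB1
      push_cast at r3 rd3 ⊢
      simp only [eval_mul, eval_sub, eval_add, eval_C, eval_X, eval_one, eval_pow,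
        show k+1+2 = k+3 from rfl, show k+1+1 = k+2 from rfl]
      set G0 := Polynomial.eval x (geg l k)
      set G1 := Polynomial.eval x (geg l (k+1))
      set G2 := Polynomial.eval x (geg l (k+2))
      set G3 := Polynomial.eval x (geg l (k+3))
      set D1 := Polynomial.eval x (derivative (geg l (k+1)))
      set D2 := Polynomial.eval x (derivative (geg l (k+2)))
      set D3 := Polynomial.eval x (derivative (geg l (k+3)))
      have hD3 : D3 = (2*((k:ℝ)+2+l)*(G2 + x*D2) - ((k:ℝ)+1+2*l)*D1)/((k:ℝ)+3) := by
        rw [eq_div_iff hk3]; linarith [rd3]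
      have hG3 : G3 = (2*((k:ℝ)+2+l)*x*G2 - ((k:ℝ)+1+2*l)*G1)/((k:ℝ)+3) := by
        rw [eq_div_iff hk3]; linarith [r3]
      have hD2 : D2 = (((k:ℝ)+1+2*l)*G1 - ((k:ℝ)+2)*x*G2)/(1-x^2) := by
        rw [eq_div_iff hden]; linarith [hB1]
      have hG2 : G2 = (2*((k:ℝ)+1+l)*x*G1 - ((k:ℝ)+2*l)*G0)/((k:ℝ)+2) := by
        rw [eq_div_iff hk2]; linarith [r2]
      have hD1 : D1 = (((k:ℝ)+2*l)*G0 - ((k:ℝ)+1)*x*G1)/(1-x^2) := by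
        rw [eq_div_iff hden]; linarith [hB0]
      rw [hD3, hG3, hD2, hG2, hD1]
      field_simp
      ring
  exact fun n => (key n).1


-- PART 2 --

lemma gegA (l : ℝ) : ∀ n : ℕ,
    (1 - Polynomial.X^2) * derivative (derivative (geg l n))
      + Polynomial.C ((n:ℝ)*((n:ℝ)+2*l)) * geg l n
      = Polynomial.C (2*l+1) * Polynomial.X * derivative (geg l n) := by
  have base0 : (1 - Polynomial.X^2) * derivative (derivative (geg l 0))
      + Polynomial.C ((0:ℝ)*((0:ℝ)+2*l)) * geg l 0
      = Polynomial.C (2*l+1) * Polynomial.X * derivative (geg l 0) := by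
    have h0 : geg l 0 = 1 := rfl
    rw [h0]
    simp
  have base1 : (1 - Polynomial.X^2) * derivative (derivative (geg l 1))
      + Polynomial.C ((1:ℝ)*((1:ℝ)+2*l)) * geg l 1
      = Polynomial.C (2*l+1) * Polynomial.X * derivative (geg l 1) := by
    apply Polynomial.funext; intro x
    show Polynomial.eval x ((1 - Polynomial.X^2) *
      derivative (derivative (Polynomial.C (2*l) * Polynomial.X)) + _) = _
    simp [derivative_mul, geg]
    ring
  have key : ∀ n : ℕ,
      ((1 - Polynomial.X^2) * derivative (derivative (geg l n))
        + Polynomial.C ((n:ℝ)*((n:ℝ)+2*l)) * geg l n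
        = Polynomial.C (2*l+1) * Polynomial.X * derivative (geg l n)) ∧
      ((1 - Polynomial.X^2) * derivative (derivative (geg l (n+1)))
        + Polynomial.C (((n:ℝ)+1)*(((n:ℝ)+1)+2*l)) * geg l (n+1)
        = Polynomial.C (2*l+1) * Polynomial.X * derivative (geg l (n+1))) := by
    intro n
    induction n with
    | zero => exact ⟨by simpa using base0, by simpa using base1⟩
    | succ k ih =>
      refine ⟨by push_cast; exact ih.2, ?_⟩
      apply Polynomial.eq_of_infinite_eval_eq
      apply Set.Infinite.mono ?_ infinite_ne
      intro x hx
      obtain ⟨hx1, hx2⟩ := hx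
      simp only [Set.mem_setOf_eq]
      have hden : (1:ℝ) - x^2 ≠ 0 := one_sub_sq_ne hx1 hx2
      have hk2 : ((k:ℝ)+2) ≠ 0 := by positivity
      have r2 := congrArg (Polynomial.eval x) (geg_rec l k)
      have rd2 := congrArg (Polynomial.eval x) (geg_rec_deriv l k)
      have re2 := congrArg (Polynomial.eval x) (geg_rec_deriv2 l k)
      have hB0 := congrArg (Polynomial.eval x) (gegB l k)
      have hA0 := congrArg (Polynomial.eval x) ih.1
      have hA1 := congrArg (Polynomial.eval x) ih.2
      simp only [eval_mul, eval_sub, eval_add, eval_C, eval_X, eval_one, eval_pow,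
        eval_ofNat, show k+1+1 = k+2 from rfl] at r2 rd2 re2 hB0 hA0 hA1
      push_cast
      simp only [eval_mul, eval_sub, eval_add, eval_C, eval_X, eval_one, eval_pow,
        show k+1+1 = k+2 from rfl]
      set G0 := Polynomial.eval x (geg l k)
      set G1 := Polynomial.eval x (geg l (k+1))
      set G2 := Polynomial.eval x (geg l (k+2))
      set D0 := Polynomial.eval x (derivative (geg l k))
      set D1 := Polynomial.eval x (derivative (geg l (k+1)))
      set D2 := Polynomial.eval x (derivative (geg l (k+2)))
      set E0 := Polynomial.eval x (derivative (derivative (geg l k)))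
      set E1 := Polynomial.eval x (derivative (derivative (geg l (k+1))))
      set E2 := Polynomial.eval x (derivative (derivative (geg l (k+2))))
      have hE2 : E2 = (2*((k:ℝ)+1+l)*(2*D1 + x*E1) - ((k:ℝ)+2*l)*E0)/((k:ℝ)+2) := by
        rw [eq_div_iff hk2]; linarith [re2]
      have hE1 : E1 = ((2*l+1)*x*D1 - ((k:ℝ)+1)*(((k:ℝ)+1)+2*l)*G1)/(1-x^2) := by
        rw [eq_div_iff hden]; linarith [hA1]
      have hE0 : E0 = ((2*l+1)*x*D0 - (k:ℝ)*((k:ℝ)+2*l)*G0)/(1-x^2) := by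
        rw [eq_div_iff hden]; linarith [hA0]
      have hD2 : D2 = (2*((k:ℝ)+1+l)*(G1 + x*D1) - ((k:ℝ)+2*l)*D0)/((k:ℝ)+2) := by
        rw [eq_div_iff hk2]; linarith [rd2]
      have hD1 : D1 = (((k:ℝ)+2*l)*G0 - ((k:ℝ)+1)*x*G1)/(1-x^2) := by
        rw [eq_div_iff hden]; linarith [hB0]
      have hG2 : G2 = (2*((k:ℝ)+1+l)*x*G1 - ((k:ℝ)+2*l)*G0)/((k:ℝ)+2) := by
        rw [eq_div_iff hk2]; linarith [r2]
      rw [hE2, hE1, hE0, hD2, hD1, hG2]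
      field_simp
      ring
  exact fun n => (key n).1

lemma geg_comp_neg (l : ℝ) : ∀ n : ℕ,
    (geg l n).comp (-Polynomial.X) = (-1)^n * geg l n
  | 0 => by simp [geg]
  | 1 => by simp [geg]
  | n+2 => by
    have h1 := geg_comp_neg l (n+1)
    have h0 := geg_comp_neg l n
    rw [show geg l (n+2) = Polynomial.C (((n:ℝ)+2)⁻¹) *
      (Polynomial.C (2*((n:ℝ)+1+l)) * Polynomial.X * geg l (n+1)
        - Polynomial.C ((n:ℝ)+2*l) * geg l n) from rfl]
    simp only [mul_comp, sub_comp, C_comp, X_comp, h1, h0, neg_comp]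
    all_goals ring

lemma geg_eval_neg (l : ℝ) (n : ℕ) (t : ℝ) :
    (geg l n).eval (-t) = (-1)^n * (geg l n).eval t := by
  have := congrArg (Polynomial.eval t) (geg_comp_neg l n)
  simpa [eval_comp] using this

lemma geg_deg (l : ℝ) (hl : 0 < l) : ∀ n : ℕ,
    (geg l n).natDegree = n ∧ 0 < (geg l n).coeff n := by
  have key : ∀ n : ℕ,
      ((geg l n).natDegree = n ∧ 0 < (geg l n).coeff n) ∧
      ((geg l (n+1)).natDegree = n+1 ∧ 0 < (geg l (n+1)).coeff (n+1)) := by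
    intro n
    induction n with
    | zero =>
      refine ⟨⟨by simp [geg], by simp [geg]⟩, ⟨?_, ?_⟩⟩
      · show (Polynomial.C (2*l) * Polynomial.X).natDegree = 1
        rw [natDegree_C_mul (by positivity), natDegree_X]
      · have hco : (Polynomial.C (2*l) * Polynomial.X).coeff 1 = 2*l := by
          rw [coeff_C_mul, coeff_X_one, mul_one]
        show (0:ℝ) < (Polynomial.C (2*l) * Polynomial.X).coeff 1
        rw [hco]; positivity
    | succ k ih =>
      obtain ⟨⟨hd0, hc0⟩, ⟨hd1, hc1⟩⟩ := ih
      have hxg : (Polynomial.C (2*((k:ℝ)+1+l)) * Polynomial.X * geg l (k+1)).coeff (k+2)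
          = 2*((k:ℝ)+1+l) * (geg l (k+1)).coeff (k+1) := by
        rw [mul_assoc, coeff_C_mul, coeff_X_mul]
      have hzz : (geg l k).coeff (k+2) = 0 :=
        coeff_eq_zero_of_natDegree_lt (by omega)
      have hcoeff : 0 < (geg l (k+2)).coeff (k+2) := by
        show (0:ℝ) < (Polynomial.C (((k:ℝ)+2)⁻¹) *
          (Polynomial.C (2*((k:ℝ)+1+l)) * Polynomial.X * geg l (k+1)
            - Polynomial.C ((k:ℝ)+2*l) * geg l k)).coeff (k+2)
        rw [coeff_C_mul, coeff_sub, coeff_C_mul, hxg, hzz, mul_zero, sub_zero]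
        have h1 : (0:ℝ) < ((k:ℝ)+2)⁻¹ := by positivity
        have h2 : (0:ℝ) < 2*((k:ℝ)+1+l) := by positivity
        positivity
      have hle : (geg l (k+2)).natDegree ≤ k+2 := by
        show (Polynomial.C (((k:ℝ)+2)⁻¹) *
          (Polynomial.C (2*((k:ℝ)+1+l)) * Polynomial.X * geg l (k+1)
            - Polynomial.C ((k:ℝ)+2*l) * geg l k)).natDegree ≤ k+2
        refine le_trans (natDegree_C_mul_le _ _) ?_
        refine le_trans (natDegree_sub_le _ _) ?_
        refine max_le ?_ ?_
        · refine le_trans natDegree_mul_le ?_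
          have h1 : (Polynomial.C (2*((k:ℝ)+1+l)) * Polynomial.X).natDegree ≤ 1 := by
            refine le_trans natDegree_mul_le ?_
            rw [natDegree_C, natDegree_X]
          omega
        · refine le_trans natDegree_mul_le ?_
          rw [natDegree_C, hd0]
          omega
      exact ⟨⟨hd1, hc1⟩, le_antisymm hle (le_natDegree_of_ne_zero (ne_of_gt hcoeff)), hcoeff⟩
  exact fun n => (key n).1

lemma geg_one_mul_factorial (l : ℝ) : ∀ n : ℕ,
    (geg l n).eval 1 * (n.factorial : ℝ) = (ascPochhammer ℝ n).eval (2*l) := by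
  have key : ∀ n : ℕ,
      ((geg l n).eval 1 * (n.factorial : ℝ) = (ascPochhammer ℝ n).eval (2*l)) ∧
      ((geg l (n+1)).eval 1 * ((n+1).factorial : ℝ)
        = (ascPochhammer ℝ (n+1)).eval (2*l)) := by
    intro n
    induction n with
    | zero =>
      constructor
      · simp [geg]
      · simp [geg, ascPochhammer_succ_right]
    | succ k ih =>
      obtain ⟨ih0, ih1⟩ := ih
      refine ⟨ih1, ?_⟩
      have r2 := congrArg (Polynomial.eval 1) (geg_rec l k)
      simp only [eval_mul, eval_sub, eval_C, eval_X, mul_one] at r2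
      have hP2 : (ascPochhammer ℝ (k+2)).eval (2*l)
          = (ascPochhammer ℝ (k+1)).eval (2*l) * (2*l + ((k:ℝ)+1)) := by
        rw [ascPochhammer_succ_right]
        push_cast [eval_mul, eval_add, eval_X, eval_natCast, eval_one]
        ring
      have hP1 : (ascPochhammer ℝ (k+1)).eval (2*l)
          = (ascPochhammer ℝ k).eval (2*l) * (2*l + (k:ℝ)) := by
        rw [ascPochhammer_succ_right]
        push_cast [eval_mul, eval_add, eval_X, eval_natCast, eval_one]
        ring
      have hf2 : ((k+2).factorial : ℝ) = ((k:ℝ)+2) * ((k+1).factorial : ℝ) := by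
        rw [Nat.factorial_succ]; push_cast; ring
      have hf1 : ((k+1).factorial : ℝ) = ((k:ℝ)+1) * (k.factorial : ℝ) := by
        rw [Nat.factorial_succ]; push_cast; ring
      rw [hP1] at ih1
      rw [hf1] at ih1
      show (geg l (k+2)).eval 1 * ((k+2).factorial : ℝ) = _
      rw [hf2, hf1, hP2, hP1]
      linear_combination (((k:ℝ)+1) * (k.factorial : ℝ)) * r2
        + 2*((k:ℝ)+1+l) * ih1 - (((k:ℝ)+2*l)*((k:ℝ)+1)) * ih0
  exact fun n => (key n).1

lemma geg_one_pos (l : ℝ) (hl : 0 < l) (n : ℕ) : 0 < (geg l n).eval 1 := by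
  have h := geg_one_mul_factorial l n
  have hpos : 0 < (ascPochhammer ℝ n).eval (2*l) := ascPochhammer_pos n (2*l) (by positivity)
  have hf : (0:ℝ) < (n.factorial : ℝ) := by positivity
  nlinarith


def sqp : Polynomial ℝ := Polynomial.C 2 * Polynomial.X^2 - 1

lemma sqp_eval (t : ℝ) : sqp.eval t = 2*t^2 - 1 := by simp [sqp]

lemma sqp_coeff2 : sqp.coeff 2 = 2 := by
  simp [sqp, coeff_one]

lemma sqp_natDegree : sqp.natDegree = 2 := by
  have hle : sqp.natDegree ≤ 2 := by
    refine le_trans (natDegree_sub_le _ _) (max_le ?_ (by simp))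
    refine le_trans natDegree_mul_le ?_
    simp
  exact le_antisymm hle (le_natDegree_of_ne_zero (by rw [sqp_coeff2]; norm_num))

lemma sqp_leadingCoeff : sqp.leadingCoeff = 2 := by
  rw [leadingCoeff, sqp_natDegree, sqp_coeff2]

lemma sqp_pow_coeff (m : ℕ) : (sqp^m).coeff (2*m) = 2^m := by
  have h1 : (sqp^m).natDegree = 2*m := by
    rw [natDegree_pow, sqp_natDegree]; ring
  have := leadingCoeff_pow sqp m
  rw [leadingCoeff, h1] at this
  rw [this, sqp_leadingCoeff]

lemma sqp_pow_natDegree (m : ℕ) : (sqp^m).natDegree = 2*m := by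
  rw [natDegree_pow, sqp_natDegree]; ring

lemma exists_half : ∀ (N : ℕ) (u : Polynomial ℝ), u.natDegree ≤ N →
    (∀ t : ℝ, u.eval (-t) = u.eval t) →
    ∃ v : Polynomial ℝ, 2 * v.natDegree ≤ u.natDegree ∧
      ∀ t : ℝ, v.eval (2*t^2 - 1) = u.eval t := by
  intro N
  induction N using Nat.strong_induction_on with
  | _ N ihN =>
    intro u hu hpar
    rcases Nat.eq_zero_or_pos u.natDegree with h0 | hpos
    · refine ⟨Polynomial.C (u.coeff 0), by simp, fun t => ?_⟩
      have : u = Polynomial.C (u.coeff 0) := eq_C_of_natDegree_le_zero (le_of_eq h0)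
      rw [eval_C]
      conv_rhs => rw [this]
      rw [eval_C]
    · have hu0 : u ≠ 0 := fun h => by
        rw [h, natDegree_zero] at hpos; exact absurd hpos (lt_irrefl 0)
      set n := u.natDegree with hn
      have hcomp : u.comp (-Polynomial.X) = u := by
        apply Polynomial.funext; intro x
        rw [eval_comp]
        simpa using hpar x
      have heven : Even n := by
        by_contra hodd
        have hlc := leadingCoeff_comp (p := u) (q := -Polynomial.X) (by simp)
        rw [hcomp] at hlc
        have hx : (-Polynomial.X : Polynomial ℝ).leadingCoeff = -1 := by
          simp [leadingCoeff]
        rw [hx] at hlc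
        rw [(Nat.not_even_iff_odd.mp hodd).neg_one_pow] at hlc
        have : u.leadingCoeff = 0 := by linarith [hlc]
        exact hu0 (leadingCoeff_eq_zero.mp this)
      obtain ⟨m, hm⟩ := heven
      have hm2 : n = 2*m := by omega
      have hm1 : 1 ≤ m := by omega
      set a := u.leadingCoeff / 2^m with ha
      set w := u - Polynomial.C a * sqp^m with hw
      have hlc : u.leadingCoeff = u.coeff (2*m) := by
        unfold Polynomial.leadingCoeff; rw [← hn, hm2]
      have hwn : w.coeff n = 0 := by
        rw [hw, coeff_sub, coeff_C_mul, hm2, sqp_pow_coeff, ha,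
          div_mul_cancel₀ _ (show (2:ℝ)^m ≠ 0 by positivity), hlc, sub_self]
      have hwle : w.natDegree ≤ n := by
        rw [hw]
        refine le_trans (natDegree_sub_le _ _) (max_le le_rfl ?_)
        refine le_trans (natDegree_C_mul_le _ _) ?_
        rw [sqp_pow_natDegree]; omega
      have hwlt : w.natDegree < n := by
        rcases eq_or_ne w 0 with h | h
        · rw [h]; simpa using hpos
        · refine lt_of_le_of_ne hwle (fun hEq => ?_)
          have : w.leadingCoeff ≠ 0 := leadingCoeff_ne_zero.mpr h
          rw [leadingCoeff, hEq] at this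
          exact this hwn
      have hwpar : ∀ t : ℝ, w.eval (-t) = w.eval t := by
        intro t
        rw [hw]
        simp only [eval_sub, eval_mul, eval_C, eval_pow, sqp_eval, hpar t, neg_sq]
      have hNpos : 1 ≤ N := le_trans hpos hu
      obtain ⟨v1, hv1d, hv1e⟩ := ihN (N-1) (by omega) w (by omega) hwpar
      refine ⟨v1 + Polynomial.C a * Polynomial.X^m, ?_, fun t => ?_⟩
      · have h2 : (Polynomial.C a * Polynomial.X^m).natDegree ≤ m :=
          le_trans (natDegree_C_mul_le _ _) (by simp)
        have h3 : v1.natDegree ≤ m := by omega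
        have h4 : (v1 + Polynomial.C a * Polynomial.X^m).natDegree ≤ m :=
          le_trans (natDegree_add_le _ _) (max_le h3 h2)
        omega
      · have h1 : w.eval t = u.eval t - a * (2*t^2-1)^m := by
          rw [hw]; simp [sqp_eval]
        rw [eval_add, eval_mul, eval_C, eval_pow, eval_X, hv1e t, h1]
        ring

lemma span_basis (e : ℕ → Polynomial ℝ) (hdeg : ∀ k, (e k).natDegree = k)
    (hco : ∀ k, (e k).coeff k ≠ 0) :
    ∀ (N : ℕ) (r : Polynomial ℝ), r.natDegree ≤ N →
      ∃ c : ℕ → ℝ, r = ∑ k ∈ Finset.range (N+1), Polynomial.C (c k) * e k := by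
  intro N
  induction N with
  | zero =>
    intro r hr
    refine ⟨fun _ => r.coeff 0 / (e 0).coeff 0, ?_⟩
    rw [Finset.sum_range_one]
    have he0 : e 0 = Polynomial.C ((e 0).coeff 0) :=
      eq_C_of_natDegree_le_zero (le_of_eq (hdeg 0))
    calc r = Polynomial.C (r.coeff 0) := eq_C_of_natDegree_le_zero hr
      _ = Polynomial.C (r.coeff 0 / (e 0).coeff 0) * e 0 := by
          rw [he0, ← C_mul, coeff_C_zero, div_mul_cancel₀ _ (hco 0)]
  | succ N ih =>
    intro r hr
    set a := r.coeff (N+1) / (e (N+1)).coeff (N+1) with ha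
    set w := r - Polynomial.C a * e (N+1) with hw
    have hwdeg : w.natDegree ≤ N := by
      refine natDegree_le_iff_coeff_eq_zero.mpr (fun k hk => ?_)
      rcases eq_or_lt_of_le (Nat.succ_le_of_lt hk) with h | h
      · rw [hw, coeff_sub, coeff_C_mul, ← h, ha,
          div_mul_cancel₀ _ (hco (N+1)), sub_self]
      · rw [hw, coeff_sub, coeff_C_mul,
          coeff_eq_zero_of_natDegree_lt (lt_of_le_of_lt hr h),
          coeff_eq_zero_of_natDegree_lt (lt_of_le_of_lt (le_of_eq (hdeg (N+1))) h),
          mul_zero, sub_zero]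
    obtain ⟨c, hc⟩ := ih w hwdeg
    refine ⟨fun k => if k = N+1 then a else c k, ?_⟩
    rw [Finset.sum_range_succ]
    beta_reduce
    rw [if_pos rfl]
    have hsum : (∑ k ∈ Finset.range (N+1),
        Polynomial.C (if k = N+1 then a else c k) * e k) = w := by
      rw [hc]
      refine Finset.sum_congr rfl (fun k hk => ?_)
      have hk' := Finset.mem_range.mp hk
      rw [if_neg (by omega)]
    rw [hsum, hw]; ring

lemma mu_inj {l : ℝ} (hl : 0 < l) {m k : ℕ} (h : m ≠ k) :
    (m:ℝ)*((m:ℝ)+2*l) ≠ (k:ℝ)*((k:ℝ)+2*l) := by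
  intro heq
  rcases h.lt_or_gt with hm | hm
  · have h1 : (m:ℝ) < (k:ℝ) := by exact_mod_cast hm
    have h2 : (0:ℝ) ≤ (m:ℝ) := Nat.cast_nonneg m
    nlinarith
  · have h1 : (k:ℝ) < (m:ℝ) := by exact_mod_cast hm
    have h2 : (0:ℝ) ≤ (k:ℝ) := Nat.cast_nonneg k
    nlinarith


lemma weight_intervalIntegrable {a b : ℝ} (ha : -1 < a) (hb : -1 < b) :
    IntervalIntegrable (fun t : ℝ => (1-t)^a * (1+t)^b) volume (-1) 1 := by
  have h1 : IntervalIntegrable (fun t : ℝ => (1-t)^a) volume 0 1 := by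
    have h := (intervalIntegral.intervalIntegrable_rpow' (a := 0) (b := 1) ha).comp_sub_left 1
    norm_num at h
    exact h.symm
  have h2 : ContinuousOn (fun t : ℝ => (1+t)^b) (Set.uIcc (0:ℝ) 1) := by
    refine ContinuousOn.rpow_const (by fun_prop) (fun x hx => Or.inl ?_)
    rw [Set.uIcc_of_le (by norm_num)] at hx
    have := hx.1
    positivity
  have P1 : IntervalIntegrable (fun t : ℝ => (1-t)^a * (1+t)^b) volume 0 1 :=
    h1.mul_continuousOn h2
  have h3 : IntervalIntegrable (fun t : ℝ => (1+t)^b) volume (-1) 0 := by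
    have h := (intervalIntegral.intervalIntegrable_rpow' (a := 0) (b := 1) hb).comp_add_right 1
    norm_num at h
    rw [show (fun t : ℝ => (1+t)^b) = (fun x : ℝ => (x+1)^b) from funext fun t => by
      rw [add_comm]]
    exact h
  have h4 : ContinuousOn (fun t : ℝ => (1-t)^a) (Set.uIcc (-1:ℝ) 0) := by
    refine ContinuousOn.rpow_const (by fun_prop) (fun x hx => Or.inl ?_)
    rw [Set.uIcc_of_le (by norm_num)] at hx
    have := hx.2
    have : (0:ℝ) < 1 - x := by linarith
    positivity
  have P2' : IntervalIntegrable (fun t : ℝ => (1+t)^b * (1-t)^a) volume (-1) 0 :=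
    h3.mul_continuousOn h4
  have heq : (fun t : ℝ => (1-t)^a * (1+t)^b) = (fun t : ℝ => (1+t)^b * (1-t)^a) := by
    funext t; ring
  have P1'' : IntervalIntegrable (fun t : ℝ => (1+t)^b * (1-t)^a) volume 0 1 := by
    rw [← heq]; exact P1
  rw [heq]
  exact P2'.trans P1''

lemma weight_integrableOn {a b : ℝ} (ha : -1 < a) (hb : -1 < b) :
    IntegrableOn (fun t : ℝ => (1-t)^a * (1+t)^b) (Set.Ioc (-1:ℝ) 1) volume :=
  (intervalIntegrable_iff_integrableOn_Ioc_of_le (by norm_num)).mp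
    (weight_intervalIntegrable ha hb)

lemma poly_weight_integrableOn (u : Polynomial ℝ) {a b : ℝ} (ha : -1 < a) (hb : -1 < b) :
    IntegrableOn (fun t : ℝ => u.eval t * ((1-t)^a * (1+t)^b)) (Set.Ioc (-1:ℝ) 1) volume := by
  obtain ⟨M, hM⟩ : ∃ M, ∀ x ∈ Set.Icc (-1:ℝ) 1, ‖u.eval x‖ ≤ M :=
    isCompact_Icc.exists_bound_of_continuousOn u.continuous.continuousOn
  refine Integrable.bdd_mul (c := M) (weight_integrableOn ha hb)
    u.continuous.aestronglyMeasurable ?_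
  filter_upwards [ae_restrict_mem measurableSet_Ioc] with x hx
  exact hM x ⟨le_of_lt hx.1, hx.2⟩

lemma geg_weight_eq {l : ℝ} {t : ℝ} (ht : t ∈ Set.Ioo (-1:ℝ) 1) :
    (1-t)^(l-1/2) * (1+t)^(l-1/2) = (1-t^2)^(l-1/2) := by
  rw [← Real.mul_rpow (by nlinarith [ht.2] : (0:ℝ) ≤ 1-t) (by nlinarith [ht.1] : (0:ℝ) ≤ 1+t)]
  congr 1
  ring

lemma poly_gweight_integrableOn {l : ℝ} (hl : 0 < l) (u : Polynomial ℝ) :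
    IntegrableOn (fun t : ℝ => u.eval t * (1-t^2)^(l-1/2)) (Set.Ioo (-1:ℝ) 1) volume := by
  have h := (poly_weight_integrableOn u (a := l-1/2) (b := l-1/2)
    (by linarith) (by linarith)).mono_set Set.Ioo_subset_Ioc_self
  refine h.congr_fun (fun t ht => ?_) measurableSet_Ioo
  beta_reduce
  rw [geg_weight_eq ht]

lemma poly_jweight_integrableOn {l : ℝ} (hl : 0 < l) (u : Polynomial ℝ) :
    IntegrableOn (fun t : ℝ => u.eval t * ((1-t)^(l-1/2) * (1+t)^((-1:ℝ)/2)))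
      (Set.Ioo (-1:ℝ) 1) volume :=
  (poly_weight_integrableOn u (by linarith) (by norm_num)).mono_set Set.Ioo_subset_Ioc_self

lemma odd_integral (h : ℝ → ℝ) (hpar : ∀ t, h (-t) = - h t)
    (hint : IntegrableOn h (Set.Ioo (-1:ℝ) 1) volume) :
    ∫ t in Set.Ioo (-1:ℝ) 1, h t = 0 := by
  have hI1 : IntervalIntegrable h volume 0 1 := by
    rw [intervalIntegrable_iff_integrableOn_Ioc_of_le (by norm_num),
      integrableOn_Ioc_iff_integrableOn_Ioo]
    exact hint.mono_set (fun x hx => ⟨by linarith [hx.1], hx.2⟩)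
  have hI2 : IntervalIntegrable h volume (-1) 0 := by
    rw [intervalIntegrable_iff_integrableOn_Ioc_of_le (by norm_num)]
    exact hint.mono_set (fun x hx => ⟨hx.1, by linarith [hx.2]⟩)
  have key : ∫ t in Set.Ioo (-1:ℝ) 1, h t = ∫ t in (-1:ℝ)..1, h t := by
    rw [intervalIntegral.integral_of_le (by norm_num), integral_Ioc_eq_integral_Ioo]
  have hsplit : ∫ t in (-1:ℝ)..1, h t
      = (∫ t in (-1:ℝ)..0, h t) + ∫ t in (0:ℝ)..1, h t :=
    (intervalIntegral.integral_add_adjacent_intervals hI2 hI1).symm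
  have hneg : (∫ t in (0:ℝ)..1, h (-t)) = ∫ t in (-1:ℝ)..0, h t := by
    have := intervalIntegral.integral_comp_neg (a := (0:ℝ)) (b := 1) (f := h)
    simpa using this
  have hodd : (∫ t in (0:ℝ)..1, h (-t)) = - ∫ t in (0:ℝ)..1, h t := by
    simp only [hpar]
    exact intervalIntegral.integral_neg
  rw [key, hsplit, ← hneg, hodd]
  ring

lemma even_integral (h : ℝ → ℝ) (hpar : ∀ t, h (-t) = h t)
    (hint : IntegrableOn h (Set.Ioo (-1:ℝ) 1) volume) :
    ∫ t in Set.Ioo (-1:ℝ) 1, h t = 2 * ∫ t in Set.Ioo (0:ℝ) 1, h t := by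
  have hI1 : IntervalIntegrable h volume 0 1 := by
    rw [intervalIntegrable_iff_integrableOn_Ioc_of_le (by norm_num),
      integrableOn_Ioc_iff_integrableOn_Ioo]
    exact hint.mono_set (fun x hx => ⟨by linarith [hx.1], hx.2⟩)
  have hI2 : IntervalIntegrable h volume (-1) 0 := by
    rw [intervalIntegrable_iff_integrableOn_Ioc_of_le (by norm_num)]
    exact hint.mono_set (fun x hx => ⟨hx.1, by linarith [hx.2]⟩)
  have key : ∫ t in Set.Ioo (-1:ℝ) 1, h t = ∫ t in (-1:ℝ)..1, h t := by
    rw [intervalIntegral.integral_of_le (by norm_num), integral_Ioc_eq_integral_Ioo]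
  have key2 : ∫ t in Set.Ioo (0:ℝ) 1, h t = ∫ t in (0:ℝ)..1, h t := by
    rw [intervalIntegral.integral_of_le (by norm_num), integral_Ioc_eq_integral_Ioo]
  have hsplit : ∫ t in (-1:ℝ)..1, h t
      = (∫ t in (-1:ℝ)..0, h t) + ∫ t in (0:ℝ)..1, h t :=
    (intervalIntegral.integral_add_adjacent_intervals hI2 hI1).symm
  have hneg : (∫ t in (0:ℝ)..1, h (-t)) = ∫ t in (-1:ℝ)..0, h t := by
    have := intervalIntegral.integral_comp_neg (a := (0:ℝ)) (b := 1) (f := h)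
    simpa using this
  have heven : (∫ t in (0:ℝ)..1, h (-t)) = ∫ t in (0:ℝ)..1, h t := by
    simp only [hpar]
  rw [key, key2, hsplit, ← hneg, heven]
  ring

lemma cov (g : ℝ → ℝ) :
    ∫ x in Set.Ioo (-1:ℝ) 1, g x
      = ∫ t in Set.Ioo (0:ℝ) 1, |4*t| • g (2*t^2-1) := by
  have hderiv : ∀ x ∈ Set.Ioo (0:ℝ) 1,
      HasDerivWithinAt (fun t : ℝ => 2*t^2-1) (4*x) (Set.Ioo (0:ℝ) 1) x := by
    intro x _
    have h : HasDerivAt (fun t : ℝ => 2*t^2-1) (4*x) x := by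
      have := ((hasDerivAt_pow 2 x).const_mul (2:ℝ)).sub_const 1
      refine this.congr_deriv ?_
      norm_num; ring
    exact h.hasDerivWithinAt
  have hinj : Set.InjOn (fun t : ℝ => 2*t^2-1) (Set.Ioo (0:ℝ) 1) := by
    intro p hp q hq hpq
    simp only at hpq
    have h1 : (p-q)*(p+q) = 0 := by nlinarith [hpq]
    rcases mul_eq_zero.mp h1 with h | h
    · linarith
    · exfalso; have := hp.1; have := hq.1; linarith
  have himg : (fun t : ℝ => 2*t^2-1) '' (Set.Ioo (0:ℝ) 1) = Set.Ioo (-1:ℝ) 1 := by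
    ext x
    constructor
    · rintro ⟨t, ht, rfl⟩
      have h1 := ht.1; have h2 := ht.2
      simp only [Set.mem_Ioo]
      constructor <;> nlinarith [mul_pos h1 h1, sq_nonneg t, sq_nonneg (1-t)]
    · intro hx
      refine ⟨Real.sqrt ((x+1)/2), ⟨?_, ?_⟩, ?_⟩
      · exact Real.sqrt_pos.mpr (by linarith [hx.1])
      · refine (Real.sqrt_lt' one_pos).mpr ?_
        have := hx.2; norm_num; linarith
      · have : Real.sqrt ((x+1)/2) ^ 2 = (x+1)/2 :=
          Real.sq_sqrt (by linarith [hx.1])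
        show 2 * Real.sqrt ((x+1)/2) ^ 2 - 1 = x
        rw [this]; ring
  rw [← himg]
  exact integral_image_eq_integral_abs_deriv_smul measurableSet_Ioo hderiv hinj g


-- PART 5 --

lemma ibp {l : ℝ} (hl : 0 < l) (f g : Polynomial ℝ) :
    ∫ t in Set.Ioo (-1:ℝ) 1,
      ((((1-t^2) * (derivative (derivative f)).eval t - (2*l+1)*t*(derivative f).eval t)
          * g.eval t
        - f.eval t * ((1-t^2) * (derivative (derivative g)).eval t
          - (2*l+1)*t*(derivative g).eval t)) * (1-t^2)^(l-1/2)) = 0 := by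
  set Q : Polynomial ℝ := derivative f * g - f * derivative g with hQdef
  have hQ : derivative Q = derivative (derivative f) * g - f * derivative (derivative g) := by
    rw [hQdef]
    simp only [derivative_sub, derivative_mul]
    ring
  set F : ℝ → ℝ := fun t => (1-t^2)^(l+1/2) * Q.eval t with hF
  set φ : ℝ → ℝ := fun t =>
      (((1-t^2) * (derivative (derivative f)).eval t - (2*l+1)*t*(derivative f).eval t)
          * g.eval t
        - f.eval t * ((1-t^2) * (derivative (derivative g)).eval t
          - (2*l+1)*t*(derivative g).eval t)) * (1-t^2)^(l-1/2) with hφ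
  -- integrability of φ
  set u : Polynomial ℝ := (1 - Polynomial.X^2) * derivative Q
      - Polynomial.C (2*l+1) * Polynomial.X * Q with hu
  have hphi_eq : ∀ t : ℝ, φ t = u.eval t * (1-t^2)^(l-1/2) := by
    intro t
    rw [hφ, hu]
    simp only [eval_sub, eval_mul, eval_add, eval_one, eval_pow, eval_X, eval_C, hQ, hQdef,
      eval_sub, eval_mul, derivative_mul, derivative_sub, eval_add]
    ring
  have hint_Ioo : IntegrableOn φ (Set.Ioo (-1:ℝ) 1) volume := by
    refine (poly_gweight_integrableOn hl u).congr_fun (fun t ht => ?_) measurableSet_Ioo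
    exact (hphi_eq t).symm
  have hint : IntervalIntegrable φ volume (-1) 1 := by
    rw [intervalIntegrable_iff_integrableOn_Ioc_of_le (by norm_num),
      integrableOn_Ioc_iff_integrableOn_Ioo]
    exact hint_Ioo
  have hcont : ContinuousOn F (Set.Icc (-1:ℝ) 1) := by
    apply Continuous.continuousOn
    refine Continuous.mul ?_ Q.continuous
    refine Continuous.rpow_const (by fun_prop) (fun x => Or.inr (by linarith))
  have hderiv : ∀ x ∈ Set.Ioo (-1:ℝ) 1, HasDerivAt F (φ x) x := by
    intro x hx
    have hxpos : (0:ℝ) < 1 - x^2 := by nlinarith [hx.1, hx.2]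
    have hbase : HasDerivAt (fun t : ℝ => 1-t^2) (-(2*x)) x := by
      have := (hasDerivAt_pow 2 x).const_sub (1:ℝ)
      refine this.congr_deriv ?_
      norm_num
    have hrpow : HasDerivAt (fun t : ℝ => (1-t^2)^(l+1/2))
        (-(2*x) * (l+1/2) * (1-x^2)^(l+1/2-1)) x :=
      hbase.rpow_const (Or.inl (ne_of_gt hxpos))
    have hmul := hrpow.mul (Q.hasDerivAt x)
    have hval : -(2*x) * (l+1/2) * (1-x^2)^(l+1/2-1) * Q.eval x
        + (1-x^2)^(l+1/2) * (derivative Q).eval x = φ x := by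
      have e1 : (1-x^2)^(l+1/2-1) = (1-x^2)^(l-1/2) := by congr 1; ring
      have e2 : (1-x^2)^(l+1/2) = (1-x^2) * (1-x^2)^(l-1/2) := by
        rw [show l+1/2 = 1+(l-1/2) by ring, Real.rpow_add hxpos, Real.rpow_one]
      rw [e1, e2, hφ]
      have hQe := congrArg (Polynomial.eval x) hQ
      simp only [eval_sub, eval_mul] at hQe
      rw [hQe]
      have hQe2 : Q.eval x = (derivative f).eval x * g.eval x
          - f.eval x * (derivative g).eval x := by
        rw [hQdef]; simp [eval_sub, eval_mul]
      rw [hQe2]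
      ring
    rw [← hval]
    exact hmul
  have hFTC := intervalIntegral.integral_eq_sub_of_hasDeriv_right_of_le (by norm_num)
    hcont (fun x hx => (hderiv x hx).hasDerivWithinAt) hint
  have hF1 : F 1 = 0 := by
    rw [hF]
    norm_num
    left
    exact Real.zero_rpow (by positivity)
  have hFm1 : F (-1) = 0 := by
    rw [hF]
    norm_num
    left
    exact Real.zero_rpow (by positivity)
  rw [hF1, hFm1, sub_zero] at hFTC
  have : ∫ t in Set.Ioo (-1:ℝ) 1, φ t = ∫ t in (-1:ℝ)..1, φ t := by
    rw [intervalIntegral.integral_of_le (by norm_num), integral_Ioc_eq_integral_Ioo]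
  rw [this, hFTC]

lemma geg_ne_zero {l : ℝ} (hl : 0 < l) (k : ℕ) : geg l k ≠ 0 := by
  intro h
  have := (geg_deg l hl k).2
  rw [h] at this
  simp at this

lemma geg_orth {l : ℝ} (hl : 0 < l) {m k : ℕ} (hmk : m ≠ k) :
    ∫ t in Set.Ioo (-1:ℝ) 1,
      (geg l m).eval t * (geg l k).eval t * (1-t^2)^(l-1/2) = 0 := by
  have hibp := ibp hl (geg l m) (geg l k)
  have hmode := gegA l m
  have hkode := gegA l k
  have hpoint : ∀ t : ℝ,
      ((((1-t^2) * (derivative (derivative (geg l m))).eval t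
          - (2*l+1)*t*(derivative (geg l m)).eval t) * (geg l k).eval t
        - (geg l m).eval t * ((1-t^2) * (derivative (derivative (geg l k))).eval t
          - (2*l+1)*t*(derivative (geg l k)).eval t)) * (1-t^2)^(l-1/2))
      = ((k:ℝ)*((k:ℝ)+2*l) - (m:ℝ)*((m:ℝ)+2*l))
          * ((geg l m).eval t * (geg l k).eval t * (1-t^2)^(l-1/2)) := by
    intro t
    have hm := congrArg (Polynomial.eval t) hmode
    have hk := congrArg (Polynomial.eval t) hkode
    simp only [eval_add, eval_mul, eval_sub, eval_one, eval_pow, eval_X, eval_C] at hm hk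
    have hm' : (1-t^2) * (derivative (derivative (geg l m))).eval t
        - (2*l+1)*t*(derivative (geg l m)).eval t
        = -((m:ℝ)*((m:ℝ)+2*l)) * (geg l m).eval t := by linarith [hm]
    have hk' : (1-t^2) * (derivative (derivative (geg l k))).eval t
        - (2*l+1)*t*(derivative (geg l k)).eval t
        = -((k:ℝ)*((k:ℝ)+2*l)) * (geg l k).eval t := by linarith [hk]
    rw [hm', hk']
    ring
  rw [setIntegral_congr_fun measurableSet_Ioo (fun t _ => hpoint t)] at hibp
  rw [integral_const_mul] at hibp
  rcases mul_eq_zero.mp hibp with h | h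
  · exact absurd (sub_eq_zero.mp h) (mu_inj hl hmk).symm
  · exact h

lemma geg_sq_pos {l : ℝ} (hl : 0 < l) (k : ℕ) :
    0 < ∫ t in Set.Ioo (-1:ℝ) 1, ((geg l k).eval t)^2 * (1-t^2)^(l-1/2) := by
  have hnn : 0 ≤ᵐ[volume.restrict (Set.Ioo (-1:ℝ) 1)]
      fun t => ((geg l k).eval t)^2 * (1-t^2)^(l-1/2) := by
    filter_upwards [ae_restrict_mem measurableSet_Ioo] with t ht
    have h1 : (0:ℝ) < 1 - t^2 := by nlinarith [ht.1, ht.2]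
    positivity
  have hint : IntegrableOn (fun t => ((geg l k).eval t)^2 * (1-t^2)^(l-1/2))
      (Set.Ioo (-1:ℝ) 1) volume := by
    refine (poly_gweight_integrableOn hl ((geg l k)^2)).congr_fun (fun t ht => ?_)
      measurableSet_Ioo
    simp [eval_pow]
  rw [setIntegral_pos_iff_support_of_nonneg_ae hnn hint]
  have hsub : Set.Ioo (-1:ℝ) 1 \ {x | (geg l k).IsRoot x}
      ⊆ (Function.support fun t => ((geg l k).eval t)^2 * (1-t^2)^(l-1/2))
        ∩ Set.Ioo (-1:ℝ) 1 := by
    rintro t ⟨ht, hroot⟩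
    refine ⟨?_, ht⟩
    have h1 : (0:ℝ) < 1 - t^2 := by nlinarith [ht.1, ht.2]
    have h2 : (geg l k).eval t ≠ 0 := hroot
    have h3 : (0:ℝ) < (1-t^2)^(l-1/2) := Real.rpow_pos_of_pos h1 _
    exact mul_ne_zero (pow_ne_zero _ h2) (ne_of_gt h3)
  have hroots : volume {x : ℝ | (geg l k).IsRoot x} = 0 :=
    (Polynomial.finite_setOf_isRoot (geg_ne_zero hl k)).measure_zero _
  have hmeas : volume (Set.Ioo (-1:ℝ) 1 \ {x | (geg l k).IsRoot x})
      = volume (Set.Ioo (-1:ℝ) 1) := measure_diff_null hroots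
  have hpos : (0:ENNReal) < volume (Set.Ioo (-1:ℝ) 1) := by
    rw [Real.volume_Ioo]
    norm_num
  calc (0:ENNReal) < volume (Set.Ioo (-1:ℝ) 1) := hpos
    _ = volume (Set.Ioo (-1:ℝ) 1 \ {x | (geg l k).IsRoot x}) := hmeas.symm
    _ ≤ _ := measure_mono hsub


-- PART 6 --

theorem key_ratio {lam : ℝ} (hlam : 0 < lam) (n : ℕ) (θ : ℝ) (p : ℕ → ℝ → ℝ)
    (hp : IsOrthonormalJacobi (lam - 1 / 2) (-1 / 2) p) :
    p n 1 ≠ 0 ∧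
    p n (Real.cos (2*θ)) / p n 1
      = gegenbauer lam (2*n) (Real.cos θ) / gegenbauer lam (2*n) 1 := by
  obtain ⟨hex, hON⟩ := hp
  choose q hdeg hlead hev using hex
  set l := lam with hldef
  -- the Jacobi weight
  set wJ : ℝ → ℝ := fun t => (1-t)^(l - 1/2) * (1+t)^(-1/2 : ℝ) with hwJ
  set wG : ℝ → ℝ := fun t => (1-t^2)^(l - 1/2) with hwG
  -- Z ≠ 0
  have hZ : (∫ t in Set.Icc (-1:ℝ) 1, (1-t)^(l - 1/2) * (1+t)^(-1/2 : ℝ)) ≠ 0 := by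
    intro h
    have h00 := hON 0 0
    rw [if_pos rfl, h] at h00
    simp at h00
  -- J-orthogonality in q-form over Ioo
  have horthJ : ∀ m k : ℕ, m ≠ k →
      ∫ t in Set.Ioo (-1:ℝ) 1, (q m).eval t * (q k).eval t * wJ t = 0 := by
    intro m k hmk
    have h := hON m k
    rw [if_neg hmk] at h
    rcases mul_eq_zero.mp h with h' | h'
    · exact absurd h' (inv_ne_zero hZ)
    · rw [integral_Icc_eq_integral_Ioc, integral_Ioc_eq_integral_Ioo] at h'
      rw [← h']
      apply setIntegral_congr_fun measurableSet_Ioo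
      intro t _
      beta_reduce
      rw [hev m t, hev k t]
  -- coefficient facts for q
  have hqco : ∀ k, (q k).coeff k ≠ 0 := by
    intro k
    have := hlead k
    rw [Polynomial.leadingCoeff, hdeg k] at this
    exact ne_of_gt this
  -- J-orthogonality against arbitrary lower-degree polynomials
  have hJlow : ∀ s : Polynomial ℝ, s.natDegree < n →
      ∫ t in Set.Ioo (-1:ℝ) 1, (q n).eval t * s.eval t * wJ t = 0 := by
    intro s hs
    have hn1 : 1 ≤ n := Nat.pos_of_ne_zero (by intro h; omega)
    obtain ⟨c, hc⟩ := span_basis q hdeg hqco (n-1) s (by omega)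
    have hrange : (n-1)+1 = n := by omega
    rw [hrange] at hc
    have hpt : ∀ t ∈ Set.Ioo (-1:ℝ) 1, (q n).eval t * s.eval t * wJ t
        = ∑ k ∈ Finset.range n, c k * ((q n * q k).eval t * wJ t) := by
      intro t _
      rw [hc]
      simp only [eval_finset_sum, eval_mul, eval_C]
      rw [Finset.mul_sum, Finset.sum_mul]
      exact Finset.sum_congr rfl fun k _ => by ring
    rw [setIntegral_congr_fun measurableSet_Ioo hpt]
    rw [integral_finset_sum]
    · refine Finset.sum_eq_zero fun k hk => ?_
      have hkn : k ≠ n := by have := Finset.mem_range.mp hk; omega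
      rw [integral_const_mul]
      have : ∫ t in Set.Ioo (-1:ℝ) 1, (q n * q k).eval t * wJ t
          = ∫ t in Set.Ioo (-1:ℝ) 1, (q n).eval t * (q k).eval t * wJ t := by
        apply setIntegral_congr_fun measurableSet_Ioo
        intro t _
        beta_reduce
        rw [eval_mul]
      rw [this, horthJ n k (Ne.symm hkn)]
      ring
    · intro k _
      apply Integrable.const_mul
      exact (poly_weight_integrableOn (q n * q k) (by linarith) (by norm_num)).mono_set
        Set.Ioo_subset_Ioc_self
  -- the composed polynomial G
  set G : Polynomial ℝ := (q n).comp sqp with hG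
  have hGev : ∀ t : ℝ, G.eval t = (q n).eval (2*t^2-1) := by
    intro t
    rw [hG, eval_comp, sqp_eval]
  have hGdeg : G.natDegree = 2*n := by
    rw [hG, natDegree_comp, hdeg n, sqp_natDegree, Nat.mul_comm]
  have hGpar : ∀ t : ℝ, G.eval (-t) = G.eval t := by
    intro t
    rw [hGev, hGev, neg_sq]
  -- orthogonality of G against lower Gegenbauer polynomials
  have horthG : ∀ k, k < 2*n →
      ∫ t in Set.Ioo (-1:ℝ) 1, G.eval t * (geg l k).eval t * wG t = 0 := by
    intro k hk
    have hint : IntegrableOn (fun t => G.eval t * (geg l k).eval t * wG t)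
        (Set.Ioo (-1:ℝ) 1) volume := by
      refine (poly_gweight_integrableOn hlam (G * geg l k)).congr_fun
        (fun t _ => ?_) measurableSet_Ioo
      beta_reduce
      rw [eval_mul, hwG]
    rcases Nat.even_or_odd k with hkeven | hkodd
    · -- even case : change of variables
      obtain ⟨j, hj⟩ := hkeven
      have hk2j : k = 2*j := by omega
      have hjn : j < n := by omega
      have hgpar : ∀ t : ℝ, (geg l k).eval (-t) = (geg l k).eval t := by
        intro t
        rw [geg_eval_neg, hk2j, pow_mul]
        norm_num
      obtain ⟨v, hvdeg, hvev⟩ := exists_half k (geg l k) (le_of_eq (geg_deg l hlam k).1) hgpar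
      have hvn : v.natDegree < n := by
        have := (geg_deg l hlam k).1
        omega
      -- the even reduction
      have heven : ∫ t in Set.Ioo (-1:ℝ) 1, G.eval t * (geg l k).eval t * wG t
          = 2 * ∫ t in Set.Ioo (0:ℝ) 1, G.eval t * (geg l k).eval t * wG t := by
        refine even_integral _ (fun t => ?_) hint
        rw [hGpar, hgpar, hwG]
        simp only [neg_sq]
      set gfun : ℝ → ℝ := fun x => (q n).eval x * v.eval x * wJ x with hgfun
      have hcov := cov gfun
      have hzero : ∫ x in Set.Ioo (-1:ℝ) 1, gfun x = 0 := hJlow v hvn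
      have hpt2 : ∀ t ∈ Set.Ioo (0:ℝ) 1,
          |4*t| • gfun (2*t^2-1)
            = (2:ℝ)^(l+1) * (G.eval t * (geg l k).eval t * wG t) := by
        intro t ht
        have ht0 : (0:ℝ) < t := ht.1
        have ht1 : t < 1 := ht.2
        have h1t : (0:ℝ) ≤ 1 - t^2 := by nlinarith
        have habs : |4*t| = 4*t := abs_of_pos (by linarith)
        rw [smul_eq_mul, habs, hgfun]
        simp only
        rw [hGev t, ← hvev t]
        have e1 : (1-(2*t^2-1)) = 2*(1-t^2) := by ring
        have e2 : (1+(2*t^2-1)) = 2*t^2 := by ring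
        rw [hwJ]
        simp only
        rw [e1, e2]
        rw [Real.mul_rpow (by norm_num) h1t, Real.mul_rpow (by norm_num) (sq_nonneg t)]
        have e3 : ((t:ℝ)^2)^(-1/2 : ℝ) = t⁻¹ := by
          rw [← Real.rpow_natCast t 2, ← Real.rpow_mul (le_of_lt ht0)]
          norm_num
          exact Real.rpow_neg_one t
        rw [e3, hwG]
        simp only
        have e4 : (2:ℝ)^(l-1/2) * (2:ℝ)^(-1/2 : ℝ) = (2:ℝ)^(l-1) := by
          rw [← Real.rpow_add (by norm_num : (0:ℝ) < 2)]
          congr 1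
          ring
        have h22 : (2:ℝ)^(2:ℝ) = 4 := by norm_num
        have e5 : (2:ℝ)^(l+1) = 4 * (2:ℝ)^(l-1) := by
          rw [show l+1 = (l-1)+2 by ring, Real.rpow_add (by norm_num : (0:ℝ) < 2), h22]
          ring
        have e45 : (2:ℝ)^(l+1) = 4 * ((2:ℝ)^(l-1/2) * (2:ℝ)^(-1/2 : ℝ)) := by
          rw [e5, ← e4]
        rw [e45]
        have ht0' : t ≠ 0 := ne_of_gt ht0
        field_simp
      have hcov2 : ∫ t in Set.Ioo (0:ℝ) 1, |4*t| • gfun (2*t^2-1)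
          = (2:ℝ)^(l+1) * ∫ t in Set.Ioo (0:ℝ) 1,
              G.eval t * (geg l k).eval t * wG t := by
        rw [setIntegral_congr_fun measurableSet_Ioo hpt2, integral_const_mul]
      have hzz : (2:ℝ)^(l+1) * (∫ t in Set.Ioo (0:ℝ) 1,
          G.eval t * (geg l k).eval t * wG t) = 0 := by
        rw [← hcov2, ← hcov, hzero]
      have h2ne : ((2:ℝ)^(l+1)) ≠ 0 := ne_of_gt (Real.rpow_pos_of_pos (by norm_num) _)
      rw [heven]
      rcases mul_eq_zero.mp hzz with h | h
      · exact absurd h h2ne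
      · rw [h]; ring
    · -- odd case : parity
      refine odd_integral _ (fun t => ?_) hint
      rw [hGpar, geg_eval_neg, hkodd.neg_one_pow, hwG]
      simp only [neg_sq]
      ring
  -- expand G in the Gegenbauer basis
  obtain ⟨c, hc⟩ := span_basis (geg l) (fun k => (geg_deg l hlam k).1)
    (fun k => ne_of_gt (geg_deg l hlam k).2) (2*n) G (le_of_eq hGdeg)
  have hcj : ∀ j, j < 2*n → c j = 0 := by
    intro j hj
    have h0 := horthG j hj
    have hpt : ∀ t ∈ Set.Ioo (-1:ℝ) 1, G.eval t * (geg l j).eval t * wG t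
        = ∑ k ∈ Finset.range (2*n+1),
            c k * ((geg l k * geg l j).eval t * wG t) := by
      intro t _
      conv_lhs => rw [hc]
      simp only [eval_finset_sum, eval_mul, eval_C]
      rw [Finset.sum_mul, Finset.sum_mul]
      exact Finset.sum_congr rfl fun k _ => by ring
    rw [setIntegral_congr_fun measurableSet_Ioo hpt, integral_finset_sum] at h0
    · rw [Finset.sum_eq_single j] at h0
      · rw [integral_const_mul] at h0
        have hIpos : 0 < ∫ t in Set.Ioo (-1:ℝ) 1,
            (geg l j * geg l j).eval t * wG t := by
          have := geg_sq_pos hlam (l := l) j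
          rw [show (∫ t in Set.Ioo (-1:ℝ) 1, (geg l j * geg l j).eval t * wG t)
              = ∫ t in Set.Ioo (-1:ℝ) 1, ((geg l j).eval t)^2 * (1-t^2)^(l-1/2) from
            setIntegral_congr_fun measurableSet_Ioo (fun t _ => by
              beta_reduce; rw [eval_mul, hwG]; ring)]
          exact this
        rcases mul_eq_zero.mp h0 with h | h
        · exact h
        · exact absurd h (ne_of_gt hIpos)
      · intro k hk hkj
        rw [integral_const_mul]
        have : ∫ t in Set.Ioo (-1:ℝ) 1, (geg l k * geg l j).eval t * wG t
            = ∫ t in Set.Ioo (-1:ℝ) 1,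
                (geg l k).eval t * (geg l j).eval t * (1-t^2)^(l-1/2) :=
          setIntegral_congr_fun measurableSet_Ioo (fun t _ => by
            beta_reduce; rw [eval_mul, hwG])
        rw [this, geg_orth hlam hkj]
        ring
      · intro hj'
        exact absurd (Finset.mem_range.mpr (by omega)) hj'
    · intro k _
      apply Integrable.const_mul
      refine (poly_gweight_integrableOn hlam (geg l k * geg l j)).congr_fun
        (fun t _ => ?_) measurableSet_Ioo
      beta_reduce
      rw [hwG]
  have hGc : G = Polynomial.C (c (2*n)) * geg l (2*n) := by
    rw [hc, Finset.sum_range_succ]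
    have hzero : (∑ k ∈ Finset.range (2*n), Polynomial.C (c k) * geg l k) = 0 :=
      Finset.sum_eq_zero fun k hk => by
        rw [hcj k (Finset.mem_range.mp hk), map_zero, zero_mul]
    rw [hzero, zero_add]
  have hGne : G ≠ 0 := by
    intro h
    have hlc : G.leadingCoeff = (q n).leadingCoeff * sqp.leadingCoeff ^ (q n).natDegree :=
      leadingCoeff_comp (by rw [sqp_natDegree]; norm_num)
    rw [sqp_leadingCoeff, hdeg n] at hlc
    have hpos : 0 < G.leadingCoeff := by
      rw [hlc]; exact mul_pos (hlead n) (by positivity)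
    rw [h] at hpos
    simp at hpos
  have hcne : c (2*n) ≠ 0 := fun h => hGne (by rw [hGc, h, map_zero, zero_mul])
  have hval1 : p n 1 = c (2*n) * (geg l (2*n)).eval 1 := by
    rw [hev n 1]
    have h1 : (q n).eval 1 = G.eval 1 := by rw [hGev]; norm_num
    rw [h1, hGc, eval_mul, eval_C]
  have hvalθ : p n (Real.cos (2*θ)) = c (2*n) * (geg l (2*n)).eval (Real.cos θ) := by
    rw [hev n _]
    rw [Real.cos_two_mul θ, ← hGev, hGc, eval_mul, eval_C]
  have hg1 : (0:ℝ) < (geg l (2*n)).eval 1 := geg_one_pos l hlam (2*n)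
  constructor
  · rw [hval1]; exact mul_ne_zero hcne (ne_of_gt hg1)
  · rw [hval1, hvalθ, geg_eval, geg_eval]
    exact mul_div_mul_left _ _ hcne


end Stmt17Aux

/-- if the simplex translation `T_θ^T` is defined by
`(T_θ^T f)∘ψ = T_θ^B(f∘ψ)` and `f ∈ V_n(W^T)` corresponds to the eigenfunction
`f∘ψ ∈ V_{2n}(W^B)` of `T_θ^B` with multiplier `C_{2n}^λ(cosθ)/C_{2n}^λ(1)`,
then on the simplex `T_θ^T f = (C_{2n}^λ(cosθ)/C_{2n}^λ(1))·f
= (p_n^{(λ-1/2,-1/2)}(cos 2θ)/p_n^{(λ-1/2,-1/2)}(1))·f`. -/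
theorem stmt17 {d : ℕ} {lam : ℝ} (hlam : 0 < lam) (n : ℕ) (θ : ℝ)
    (p : ℕ → ℝ → ℝ) (hp : IsOrthonormalJacobi (lam - 1 / 2) (-1 / 2) p)
    (f TTf TBf : (Fin d → ℝ) → ℝ)
    (hdef : ∀ x : Fin d → ℝ, TTf (psiMap x) = TBf x)
    (heig : ∀ x : Fin d → ℝ,
      TBf x = (gegenbauer lam (2 * n) (Real.cos θ)
        / gegenbauer lam (2 * n) 1) * f (psiMap x)) :
    ∀ y : Fin d → ℝ, (∀ i, 0 ≤ y i) → (∑ i, y i) ≤ 1 →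
      TTf y = (gegenbauer lam (2 * n) (Real.cos θ)
          / gegenbauer lam (2 * n) 1) * f y ∧
      TTf y = (p n (Real.cos (2 * θ)) / p n 1) * f y := by
  intro y hy hsum
  have hmain : TTf y = (gegenbauer lam (2*n) (Real.cos θ)
      / gegenbauer lam (2*n) 1) * f y := by
    set x : Fin d → ℝ := fun i => Real.sqrt (y i) with hx
    have hpsi : psiMap x = y := by
      funext i
      simp only [psiMap, hx]
      exact Real.sq_sqrt (hy i)
    calc TTf y = TTf (psiMap x) := by rw [hpsi]
      _ = TBf x := hdef x
      _ = (gegenbauer lam (2*n) (Real.cos θ)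
            / gegenbauer lam (2*n) 1) * f (psiMap x) := heig x
      _ = _ := by rw [hpsi]
  obtain ⟨hpn1, hratio⟩ := Stmt17Aux.key_ratio hlam n θ p hp
  exact ⟨hmain, by rw [hmain, hratio]⟩

end
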